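/- Let G be a group, H ≤ G a subgroup, and H' ≤ H a finite index subgroup of H. If H' is separable in G, then H is separable in G. -/

import Mathlib

def Subgroup.IsSeparable {G : Type*} [Group G] (H : Subgroup G) : Prop :=
  ∀ g : G, g ∉ H → ∃ K : Subgroup G, K.FiniteIndex ∧ H ≤ K ∧ g ∉ K

theorem separable_of_finiteIndex_subgroup {G : Type*} [Group G] (H H' : Subgroup G)
    (hle : H' ≤ H) (hfi : (H'.subgroupOf H).FiniteIndex)
    (hsep : H'.IsSeparable) : H.IsSeparable := by
  intro g hg
  haveI := hfi
  haveI : Finite (H ⧸ H'.subgroupOf H) := Subgroup.finite_quotient_of_finiteIndex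
  -- For each coset representative r, r⁻¹ * g ∉ H'
  have key : ∀ q : H ⧸ H'.subgroupOf H, ((Quotient.out q : H) : G)⁻¹ * g ∉ H' := by
    intro q hmem
    exact hg (by
      have := hle hmem
      have : ((Quotient.out q : H) : G) * (((Quotient.out q : H) : G)⁻¹ * g) ∈ H :=
        H.mul_mem (Quotient.out q).2 this
      simpa using this)
  choose K hKfi hKle hKg using fun q => hsep _ (key q)
  set L : Subgroup G := ⨅ q, K q with hL
  haveI : L.FiniteIndex := Subgroup.finiteIndex_iInf hKfi
  set N : Subgroup G := L.normalCore with hN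
  haveI : N.FiniteIndex := Subgroup.finiteIndex_normalCore _
  refine ⟨H ⊔ N, Subgroup.finiteIndex_of_le le_sup_right, le_sup_left, ?_⟩
  intro hgK
  rw [← SetLike.mem_coe, Subgroup.mul_normal] at hgK
  obtain ⟨h, hh, n, hn, rfl⟩ := hgK
  set q : H ⧸ H'.subgroupOf H := QuotientGroup.mk ⟨h, hh⟩ with hq
  have hout : QuotientGroup.mk (Quotient.out q) = q := QuotientGroup.out_eq' q
  rw [hq] at hout
  have hrel : ((Quotient.out q : H))⁻¹ * ⟨h, hh⟩ ∈ H'.subgroupOf H :=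
    (QuotientGroup.eq).mp hout
  rw [Subgroup.mem_subgroupOf] at hrel
  have hnK : n ∈ K q := (iInf_le K q : L ≤ K q) (L.normalCore_le hn)
  have : ((Quotient.out q : H) : G)⁻¹ * (h * n) ∈ K q := by
    rw [← mul_assoc]
    exact (K q).mul_mem (hKle q hrel) hnK
  exact hKg q this
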